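/- Let ρ : ℝ² → [0,∞) be measurable with ‖ρ‖_{L¹} ≤ 1 and ρ(x) ≤ H + ln_−|x−ξ| for some H ≥ 1, ξ ∈ ℝ². Then the field E(x) = ∫ ρ(y)(x−y)/|x−y|² dy satisfies, for all x, y ∈ ℝ² with d = |x−y| ≤ 1/3, |E(x) − E(y)| ≤ C d (1 + ln_− d)(H + ln_− d) for a constant C independent of x, y, ξ, H. -/

import Mathlib

open MeasureTheory Set Real

noncomputable def lnm (r : ℝ) : ℝ := max (-Real.log r) 0

lemma lnm_nonneg (r : ℝ) : 0 ≤ lnm r := le_max_right _ _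

lemma lnm_of_le_one {r : ℝ} (h0 : 0 < r) (h1 : r ≤ 1) : lnm r = -Real.log r := by
  have := Real.log_nonpos h0.le h1
  simp [lnm, max_eq_left, neg_nonneg.2 this]

lemma lnm_of_one_le {r : ℝ} (h1 : 1 ≤ r) : lnm r = 0 := by
  have := Real.log_nonneg h1
  simp [lnm, max_eq_right, neg_nonpos.2 this]

lemma lnm_anti {u v : ℝ} (h0 : 0 < u) (huv : u ≤ v) : lnm v ≤ lnm u := by
  have := Real.log_le_log h0 huv
  exact max_le_max (by linarith) le_rfl

lemma measurable_lnm : Measurable lnm :=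
  (Real.measurable_log.neg).max measurable_const

lemma lnm_le_two_inv_sqrt {r : ℝ} (h0 : 0 < r) : lnm r ≤ 2 * (Real.sqrt r)⁻¹ := by
  have hs : 0 < Real.sqrt r := Real.sqrt_pos.2 h0
  rcases le_or_gt 1 r with h | h
  · rw [lnm_of_one_le h]; positivity
  · rw [lnm_of_le_one h0 h.le]
    have h1 : Real.log ((Real.sqrt r)⁻¹) ≤ (Real.sqrt r)⁻¹ - 1 :=
      Real.log_le_sub_one_of_pos (by positivity)
    rw [Real.log_inv, Real.log_sqrt h0.le] at h1
    linarith

/-! ### 1-D profiles -/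

noncomputable def fker (R r : ℝ) : ℝ := if r ≤ R then r⁻¹ else 0
noncomputable def flog (R r : ℝ) : ℝ := if r ≤ R then lnm r * r⁻¹ else 0
noncomputable def fann (s r : ℝ) : ℝ := if s ≤ r ∧ r ≤ 1 then (r ^ 2)⁻¹ else 0
noncomputable def fanl (s r : ℝ) : ℝ := if s ≤ r ∧ r ≤ 1 then lnm r * (r ^ 2)⁻¹ else 0
noncomputable def fsml (s r : ℝ) : ℝ := if r ≤ s then lnm r else 0

lemma measurable_fker (R : ℝ) : Measurable (fker R) :=
  Measurable.ite measurableSet_Iic measurable_inv measurable_const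

lemma measurable_flog (R : ℝ) : Measurable (flog R) :=
  Measurable.ite measurableSet_Iic (measurable_lnm.mul measurable_inv) measurable_const

lemma measurable_fann (s : ℝ) : Measurable (fann s) := by
  have : {r : ℝ | s ≤ r ∧ r ≤ 1} = Icc s 1 := rfl
  exact Measurable.ite (this ▸ measurableSet_Icc) ((measurable_id.pow_const 2).inv)
    measurable_const

lemma measurable_fanl (s : ℝ) : Measurable (fanl s) := by
  have : {r : ℝ | s ≤ r ∧ r ≤ 1} = Icc s 1 := rfl
  exact Measurable.ite (this ▸ measurableSet_Icc)
    (measurable_lnm.mul ((measurable_id.pow_const 2).inv)) measurable_const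

lemma measurable_fsml (s : ℝ) : Measurable (fsml s) :=
  Measurable.ite measurableSet_Iic measurable_lnm measurable_const

lemma fker_nonneg {R r : ℝ} (h : 0 ≤ r) : 0 ≤ fker R r := by
  unfold fker; split <;> positivity

lemma flog_nonneg {R r : ℝ} (h : 0 ≤ r) : 0 ≤ flog R r := by
  unfold flog
  split
  · exact mul_nonneg (lnm_nonneg r) (by positivity)
  · exact le_rfl

lemma fann_nonneg {s r : ℝ} : 0 ≤ fann s r := by
  unfold fann; split <;> positivity

lemma fanl_nonneg {s r : ℝ} : 0 ≤ fanl s r := by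
  unfold fanl
  split
  · exact mul_nonneg (lnm_nonneg r) (by positivity)
  · exact le_rfl

lemma fsml_nonneg {s r : ℝ} : 0 ≤ fsml s r := by
  unfold fsml
  split
  · exact lnm_nonneg r
  · exact le_rfl

/-! ### extension helpers -/

lemma integrableOn_Ioi_of_indicator {f g : ℝ → ℝ} {t : Set ℝ} (ht : MeasurableSet t)
    (hg : IntegrableOn g t) (h : ∀ r, 0 < r → f r = t.indicator g r) :
    IntegrableOn f (Ioi (0:ℝ)) := by
  refine ((hg.integrable_indicator ht).integrableOn (s := Ioi 0)).congr ?_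
  filter_upwards [ae_restrict_mem measurableSet_Ioi] with r hr
  exact (h r hr).symm

lemma setIntegral_Ioi_of_indicator {f g : ℝ → ℝ} {t : Set ℝ} (ht : MeasurableSet t)
    (hsub : t ⊆ Ioi (0:ℝ)) (h : ∀ r, 0 < r → f r = t.indicator g r) :
    ∫ r in Ioi (0:ℝ), f r = ∫ r in t, g r := by
  rw [setIntegral_congr_ae measurableSet_Ioi
    (ae_of_all _ fun r (hr : r ∈ Ioi (0:ℝ)) => h r hr), setIntegral_indicator ht,
    inter_eq_self_of_subset_right hsub]

/-! ### 1-D integral computations -/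

lemma integrableOn_lnm_Ioc01 : IntegrableOn lnm (Ioc (0:ℝ) 1) := by
  have hmaj : IntegrableOn (fun r : ℝ => 2 * r ^ (-(1/2) : ℝ)) (Ioc (0:ℝ) 1) := by
    rw [← intervalIntegrable_iff_integrableOn_Ioc_of_le zero_le_one]
    exact (intervalIntegral.intervalIntegrable_rpow' (by norm_num)).const_mul 2
  refine Integrable.mono' hmaj measurable_lnm.aestronglyMeasurable ?_
  filter_upwards [ae_restrict_mem measurableSet_Ioc] with r hr
  rw [Real.norm_of_nonneg (lnm_nonneg r)]
  have h2 : r ^ (-(1/2) : ℝ) = (Real.sqrt r)⁻¹ := by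
    rw [Real.sqrt_eq_rpow, ← Real.rpow_neg hr.1.le]
  rw [h2]
  exact lnm_le_two_inv_sqrt hr.1

lemma integrableOn_lnm_Ioc {R : ℝ} (hR : 0 < R) : IntegrableOn lnm (Ioc (0:ℝ) R) := by
  rcases le_or_gt R 1 with h | h
  · exact integrableOn_lnm_Ioc01.mono_set (Ioc_subset_Ioc le_rfl h)
  · rw [← Ioc_union_Ioc_eq_Ioc zero_le_one h.le]
    refine integrableOn_lnm_Ioc01.union ?_
    have : EqOn (fun _ : ℝ => (0:ℝ)) lnm (Ioc 1 R) := fun r hr =>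
      (lnm_of_one_le hr.1.le).symm
    exact (integrableOn_zero).congr_fun this measurableSet_Ioc

lemma setIntegral_lnm_Ioc {R : ℝ} (hR : 0 < R) :
    ∫ r in Ioc (0:ℝ) R, lnm r ≤ R * (1 + lnm R) := by
  have key : ∀ m : ℝ, 0 < m → m ≤ 1 → ∫ r in Ioc (0:ℝ) m, lnm r = m - m * Real.log m := by
    intro m hm hm1
    rw [← intervalIntegral.integral_of_le hm.le]
    have hFTC := intervalIntegral.integral_eq_sub_of_hasDerivAt_of_le hm.le
      (f := fun r => r - r * Real.log r) (f' := lnm) ?_ ?_ ?_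
    · rw [hFTC]; simp [Real.log_zero]
    · exact (continuous_id.sub Real.continuous_mul_log).continuousOn
    · intro r hr
      have h1 : HasDerivAt (fun r : ℝ => r - r * Real.log r) (1 - (Real.log r + 1)) r :=
        (hasDerivAt_id r).sub (Real.hasDerivAt_mul_log hr.1.ne')
      have : lnm r = 1 - (Real.log r + 1) := by
        rw [lnm_of_le_one hr.1 (hr.2.le.trans hm1)]; ring
      exact this ▸ h1
    · rw [intervalIntegrable_iff_integrableOn_Ioc_of_le hm.le]
      exact integrableOn_lnm_Ioc hm
  rcases le_or_gt R 1 with h | h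
  · rw [key R hR h, lnm_of_le_one hR h]; ring_nf; rfl
  · have hsplit : ∫ r in Ioc (0:ℝ) R, lnm r =
        (∫ r in Ioc (0:ℝ) 1, lnm r) + ∫ r in Ioc (1:ℝ) R, lnm r := by
      rw [← setIntegral_union (Ioc_disjoint_Ioc_of_le le_rfl) measurableSet_Ioc
        integrableOn_lnm_Ioc01 ((integrableOn_lnm_Ioc hR).mono_set
          (Ioc_subset_Ioc (by norm_num) le_rfl)),
        Ioc_union_Ioc_eq_Ioc zero_le_one h.le]
    have h2 : ∫ r in Ioc (1:ℝ) R, lnm r = 0 := by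
      refine setIntegral_eq_zero_of_forall_eq_zero fun r hr => lnm_of_one_le hr.1.le
    rw [hsplit, h2, key 1 one_pos le_rfl]
    simp [Real.log_one]
    nlinarith [lnm_nonneg R]

/-! ### profile integrals -/

lemma fker_indicator {R : ℝ} (hR : 0 < R) (r : ℝ) (hr : 0 < r) :
    r * fker R r = (Ioc 0 R).indicator (fun _ => (1:ℝ)) r := by
  unfold fker
  rcases le_or_gt r R with h | h
  · rw [if_pos h, indicator_of_mem (show r ∈ Ioc 0 R from ⟨hr, h⟩), mul_inv_cancel₀ hr.ne']
  · rw [if_neg (not_le.2 h), indicator_of_notMem (fun hm => absurd hm.2 (not_le.2 h)), mul_zero]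

lemma J1 {R : ℝ} (hR : 0 < R) : IntegrableOn (fun r => r * fker R r) (Ioi (0:ℝ)) :=
  integrableOn_Ioi_of_indicator measurableSet_Ioc
    (integrableOn_const measure_Ioc_lt_top.ne) (fker_indicator hR)

lemma K1 {R : ℝ} (hR : 0 < R) : ∫ r in Ioi (0:ℝ), r * fker R r = R := by
  rw [setIntegral_Ioi_of_indicator measurableSet_Ioc Ioc_subset_Ioi_self (fker_indicator hR)]
  simp [Real.volume_Ioc, ENNReal.toReal_ofReal hR.le, hR.le]

lemma flog_indicator {R : ℝ} (hR : 0 < R) (r : ℝ) (hr : 0 < r) :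
    r * flog R r = (Ioc 0 R).indicator lnm r := by
  unfold flog
  rcases le_or_gt r R with h | h
  · rw [if_pos h, indicator_of_mem (show r ∈ Ioc 0 R from ⟨hr, h⟩)]
    field_simp
  · rw [if_neg (not_le.2 h), indicator_of_notMem (fun hm => absurd hm.2 (not_le.2 h)), mul_zero]

lemma J2 {R : ℝ} (hR : 0 < R) : IntegrableOn (fun r => r * flog R r) (Ioi (0:ℝ)) :=
  integrableOn_Ioi_of_indicator measurableSet_Ioc (integrableOn_lnm_Ioc hR) (flog_indicator hR)

lemma K2 {R : ℝ} (hR : 0 < R) : ∫ r in Ioi (0:ℝ), r * flog R r ≤ R * (1 + lnm R) := by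
  rw [setIntegral_Ioi_of_indicator measurableSet_Ioc Ioc_subset_Ioi_self (flog_indicator hR)]
  exact setIntegral_lnm_Ioc hR

lemma fann_indicator {s : ℝ} (hs : 0 < s) (r : ℝ) (hr : 0 < r) :
    r * fann s r = (Icc s 1).indicator (fun r => r⁻¹) r := by
  unfold fann
  by_cases h : s ≤ r ∧ r ≤ 1
  · rw [if_pos h, indicator_of_mem (show r ∈ Icc s 1 from h)]
    field_simp
  · rw [if_neg h, indicator_of_notMem (show r ∉ Icc s 1 from h), mul_zero]

lemma integrableOn_inv_Icc {s : ℝ} (hs : 0 < s) :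
    IntegrableOn (fun r : ℝ => r⁻¹) (Icc s 1) := by
  refine ContinuousOn.integrableOn_compact isCompact_Icc ?_
  exact continuousOn_inv₀.mono fun r hr => ne_of_gt (lt_of_lt_of_le hs hr.1)

lemma J3 {s : ℝ} (hs : 0 < s) : IntegrableOn (fun r => r * fann s r) (Ioi (0:ℝ)) :=
  integrableOn_Ioi_of_indicator measurableSet_Icc (integrableOn_inv_Icc hs) (fann_indicator hs)

lemma K3 {s : ℝ} (hs : 0 < s) (hs1 : s ≤ 1) :
    ∫ r in Ioi (0:ℝ), r * fann s r = lnm s := by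
  rw [setIntegral_Ioi_of_indicator measurableSet_Icc
    (fun r hr => lt_of_lt_of_le hs hr.1) (fann_indicator hs)]
  rw [integral_Icc_eq_integral_Ioc, ← intervalIntegral.integral_of_le hs1]
  rw [integral_inv (by
    intro hmem
    rcases mem_uIcc.1 hmem with h | h <;> [linarith [h.1]; linarith [h.1]])]
  rw [lnm_of_le_one hs hs1, one_div, Real.log_inv]

lemma fanl_indicator {s : ℝ} (hs : 0 < s) (r : ℝ) (hr : 0 < r) :
    r * fanl s r = (Icc s 1).indicator (fun r => lnm r * r⁻¹) r := by
  unfold fanl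
  by_cases h : s ≤ r ∧ r ≤ 1
  · rw [if_pos h, indicator_of_mem (show r ∈ Icc s 1 from h)]
    field_simp
  · rw [if_neg h, indicator_of_notMem (show r ∉ Icc s 1 from h), mul_zero]

lemma continuousOn_lnm : ContinuousOn lnm {r : ℝ | r ≠ 0} := by
  have : lnm = (fun p : ℝ => max p 0) ∘ (fun r => -Real.log r) := rfl
  rw [this]
  exact (continuous_id.max continuous_const).comp_continuousOn
    (Real.continuousOn_log.mono (by simp [Set.compl_def])).neg

lemma integrableOn_lnm_inv_Icc {s : ℝ} (hs : 0 < s) :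
    IntegrableOn (fun r : ℝ => lnm r * r⁻¹) (Icc s 1) := by
  refine ContinuousOn.integrableOn_compact isCompact_Icc ?_
  have hsub : Icc s 1 ⊆ {r : ℝ | r ≠ 0} := fun r hr => ne_of_gt (lt_of_lt_of_le hs hr.1)
  exact (continuousOn_lnm.mono hsub).mul (continuousOn_inv₀.mono hsub)

lemma J4 {s : ℝ} (hs : 0 < s) : IntegrableOn (fun r => r * fanl s r) (Ioi (0:ℝ)) :=
  integrableOn_Ioi_of_indicator measurableSet_Icc (integrableOn_lnm_inv_Icc hs)
    (fanl_indicator hs)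

lemma K4 {s : ℝ} (hs : 0 < s) (hs1 : s ≤ 1) :
    ∫ r in Ioi (0:ℝ), r * fanl s r ≤ (lnm s) ^ 2 / 2 := by
  rw [setIntegral_Ioi_of_indicator measurableSet_Icc
    (fun r hr => lt_of_lt_of_le hs hr.1) (fanl_indicator hs)]
  rw [integral_Icc_eq_integral_Ioc, ← intervalIntegral.integral_of_le hs1]
  have hFTC := intervalIntegral.integral_eq_sub_of_hasDerivAt_of_le hs1
    (f := fun r => -(Real.log r) ^ 2 / 2) (f' := fun r => lnm r * r⁻¹) ?_ ?_ ?_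
  · rw [hFTC, lnm_of_le_one hs hs1]
    simp [Real.log_one]
    ring_nf
    rfl
  · intro r hr
    have hrne : r ≠ 0 := ne_of_gt (lt_of_lt_of_le hs hr.1)
    exact ((Real.continuousAt_log hrne).pow 2).neg.continuousWithinAt.div
      continuousWithinAt_const (by norm_num)
  · intro r hr
    have hr0 : 0 < r := lt_trans hs hr.1
    have h1 : HasDerivAt (fun r : ℝ => -(Real.log r) ^ 2 / 2)
        (-(2 * Real.log r ^ 1 * r⁻¹) / 2) r := by
      exact (((Real.hasDerivAt_log hr0.ne').pow 2).neg).div_const 2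
    have heq : lnm r * r⁻¹ = -(2 * Real.log r ^ 1 * r⁻¹) / 2 := by
      rw [lnm_of_le_one hr0 hr.2.le]; ring
    have hgoal : HasDerivAt (fun r : ℝ => -(Real.log r) ^ 2 / 2) (lnm r * r⁻¹) r := by
      rw [heq]; exact h1
    exact hgoal
  · rw [intervalIntegrable_iff_integrableOn_Ioc_of_le hs1]
    exact (integrableOn_lnm_inv_Icc hs).mono_set Ioc_subset_Icc_self

lemma fsml_indicator {s : ℝ} (hs : 0 < s) (r : ℝ) (hr : 0 < r) :
    r * fsml s r = (Ioc 0 s).indicator (fun r => r * lnm r) r := by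
  unfold fsml
  rcases le_or_gt r s with h | h
  · rw [if_pos h, indicator_of_mem (show r ∈ Ioc 0 s from ⟨hr, h⟩)]
  · rw [if_neg (not_le.2 h), indicator_of_notMem
      (show r ∉ Ioc 0 s from fun hm => absurd hm.2 (not_le.2 h)), mul_zero]

lemma integrableOn_mul_lnm_Ioc {s : ℝ} (hs : 0 < s) (hs1 : s ≤ 1) :
    IntegrableOn (fun r : ℝ => r * lnm r) (Ioc (0:ℝ) s) := by
  have hc : IntegrableOn (fun _ : ℝ => (2:ℝ)) (Ioc (0:ℝ) s) :=
    integrableOn_const measure_Ioc_lt_top.ne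
  refine Integrable.mono' hc (measurable_id.mul measurable_lnm).aestronglyMeasurable ?_
  filter_upwards [ae_restrict_mem measurableSet_Ioc] with r hr
  have hr0 : 0 < r := hr.1
  have h1 : r * lnm r ≤ r * (2 * (Real.sqrt r)⁻¹) :=
    mul_le_mul_of_nonneg_left (lnm_le_two_inv_sqrt hr0) hr0.le
  have hsq : 0 < Real.sqrt r := Real.sqrt_pos.2 hr0
  have h2 : r * (2 * (Real.sqrt r)⁻¹) = 2 * Real.sqrt r := by
    field_simp
    nlinarith [Real.mul_self_sqrt hr0.le]
  have h3 : Real.sqrt r ≤ 1 := by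
    rw [show (1:ℝ) = Real.sqrt 1 by simp]
    exact Real.sqrt_le_sqrt (hr.2.trans hs1)
  rw [Real.norm_of_nonneg (mul_nonneg hr0.le (lnm_nonneg r))]
  calc r * lnm r ≤ 2 * Real.sqrt r := h2 ▸ h1
    _ ≤ 2 := by linarith

lemma J5 {s : ℝ} (hs : 0 < s) (hs1 : s ≤ 1) :
    IntegrableOn (fun r => r * fsml s r) (Ioi (0:ℝ)) :=
  integrableOn_Ioi_of_indicator measurableSet_Ioc (integrableOn_mul_lnm_Ioc hs hs1)
    (fsml_indicator hs)

lemma K5 {s : ℝ} (hs : 0 < s) (hs1 : s ≤ 1) :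
    ∫ r in Ioi (0:ℝ), r * fsml s r ≤ s ^ 2 * (1 + lnm s) := by
  rw [setIntegral_Ioi_of_indicator measurableSet_Ioc Ioc_subset_Ioi_self (fsml_indicator hs)]
  rw [← intervalIntegral.integral_of_le hs.le]
  have hFTC := intervalIntegral.integral_eq_sub_of_hasDerivAt_of_le hs.le
    (f := fun r => r ^ 2 / 4 - (r / 2) * (r * Real.log r)) (f' := fun r => r * lnm r) ?_ ?_ ?_
  · rw [hFTC]
    have hl : Real.log s = -lnm s := by rw [lnm_of_le_one hs hs1]; ring
    simp only [Real.log_zero, hl]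
    nlinarith [lnm_nonneg s, sq_nonneg s, hs.le]
  · exact ((continuous_pow 2).div_const 4).continuousOn.sub
      (((continuous_id.div_const 2).mul Real.continuous_mul_log).continuousOn)
  · intro r hr
    have hr0 : 0 < r := hr.1
    have h1 : HasDerivAt (fun r : ℝ => r ^ 2 / 4) (2 * r ^ 1 / 4) r :=
      (hasDerivAt_pow 2 r).div_const 4
    have h2 : HasDerivAt (fun r : ℝ => (r / 2) * (r * Real.log r))
        ((1 / 2) * (r * Real.log r) + (r / 2) * (Real.log r + 1)) r :=
      ((hasDerivAt_id r).div_const 2).mul (Real.hasDerivAt_mul_log hr0.ne')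
    have h3 := h1.sub h2
    have heq : r * lnm r =
        2 * r ^ 1 / 4 - ((1 / 2) * (r * Real.log r) + (r / 2) * (Real.log r + 1)) := by
      rw [lnm_of_le_one hr0 (hr.2.le.trans hs1)]; ring
    have hgoal : HasDerivAt (fun r : ℝ => r ^ 2 / 4 - (r / 2) * (r * Real.log r))
        (r * lnm r) r := by rw [heq]; exact h3
    exact hgoal
  · rw [intervalIntegrable_iff_integrableOn_Ioc_of_le hs.le]
    exact integrableOn_mul_lnm_Ioc hs hs1

/-! ### pointwise bounds -/

lemma lnm_zero : lnm 0 = 0 := by simp [lnm, Real.log_zero]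

section Pointwise

local notation "E2" => EuclideanSpace ℝ (Fin 2)

lemma norm_smul_field (c : ℝ) (hc : 0 ≤ c) (v : E2) :
    ‖(c / ‖v‖ ^ 2) • v‖ = c * ‖v‖⁻¹ := by
  rcases eq_or_ne v 0 with h | h
  · simp [h]
  · have hv : 0 < ‖v‖ := norm_pos_iff.2 h
    rw [norm_smul, Real.norm_of_nonneg (by positivity)]
    field_simp

lemma kernel_diff {d : ℝ} (hd : 0 < d) {a b : E2} (hab : ‖a - b‖ ≤ d)
    (ha : 3 * d ≤ ‖a‖) (c : ℝ) (hc : 0 ≤ c) :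
    ‖(c / ‖a‖ ^ 2) • a - (c / ‖b‖ ^ 2) • b‖ ≤ c * (5 * d / ‖a‖ ^ 2) := by
  have hA : 0 < ‖a‖ := lt_of_lt_of_le (by linarith) ha
  have hBA : ‖a‖ - d ≤ ‖b‖ := by
    have h := norm_sub_norm_le a b
    linarith
  have hB : 0 < ‖b‖ := by linarith
  have hBle : ‖b‖ ≤ ‖a‖ + d := by
    have h := norm_sub_norm_le b a
    rw [norm_sub_rev] at h
    linarith
  have habs : |‖b‖ - ‖a‖| ≤ d := by
    rw [abs_le]; constructor <;> linarith
  have hdecomp : (c / ‖a‖ ^ 2) • a - (c / ‖b‖ ^ 2) • b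
      = (c / ‖a‖ ^ 2) • (a - b) + ((c / ‖a‖ ^ 2) - (c / ‖b‖ ^ 2)) • b := by
    rw [smul_sub, sub_smul]; abel
  rw [hdecomp]
  refine (norm_add_le _ _).trans ?_
  rw [norm_smul, norm_smul, Real.norm_of_nonneg (by positivity : (0:ℝ) ≤ c / ‖a‖ ^ 2)]
  have key : ‖(c / ‖a‖ ^ 2) - (c / ‖b‖ ^ 2)‖ ≤ c * ((‖a‖ + ‖b‖) * d) / (‖a‖ ^ 2 * ‖b‖ ^ 2) := by
    have hrw : c / ‖a‖ ^ 2 - c / ‖b‖ ^ 2 = c * ((‖b‖ - ‖a‖) * (‖b‖ + ‖a‖)) / (‖a‖ ^ 2 * ‖b‖ ^ 2) := by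
      field_simp
      ring
    rw [Real.norm_eq_abs, hrw, abs_div, abs_of_pos (by positivity : (0:ℝ) < ‖a‖ ^ 2 * ‖b‖ ^ 2),
      abs_mul, abs_of_nonneg hc, abs_mul]
    rw [abs_of_pos (by positivity : (0:ℝ) < ‖b‖ + ‖a‖)]
    have hnum : |‖b‖ - ‖a‖| * (‖b‖ + ‖a‖) ≤ (‖a‖ + ‖b‖) * d := by
      nlinarith [mul_le_mul_of_nonneg_right habs (by positivity : (0:ℝ) ≤ ‖b‖ + ‖a‖)]
    gcongr ?_ / _
    exact mul_le_mul_of_nonneg_left hnum hc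
  have hstep : c / ‖a‖ ^ 2 * ‖a - b‖ + ‖(c / ‖a‖ ^ 2) - (c / ‖b‖ ^ 2)‖ * ‖b‖ ≤
      c / ‖a‖ ^ 2 * d + (c * ((‖a‖ + ‖b‖) * d) / (‖a‖ ^ 2 * ‖b‖ ^ 2)) * ‖b‖ := by
    gcongr
  refine hstep.trans ?_
  have h2 : (c * ((‖a‖ + ‖b‖) * d) / (‖a‖ ^ 2 * ‖b‖ ^ 2)) * ‖b‖
      = c * d * ((‖a‖ + ‖b‖) / ‖b‖) / ‖a‖ ^ 2 := by
    field_simp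
  have h3 : (‖a‖ + ‖b‖) / ‖b‖ ≤ 7 / 2 := by
    rw [div_le_iff₀ hB]
    nlinarith [ha]
  rw [h2]
  have h4 : c * d * ((‖a‖ + ‖b‖) / ‖b‖) / ‖a‖ ^ 2 ≤ c * d * (7 / 2) / ‖a‖ ^ 2 := by
    gcongr
  have e1 : c / ‖a‖ ^ 2 * d = c * d / ‖a‖ ^ 2 := by ring
  have e2 : c * (5 * d / ‖a‖ ^ 2) = (c * d + c * d * (7 / 2) + c * d * (1 / 2)) / ‖a‖ ^ 2 := by
    ring
  rw [e1, e2]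
  have h5 : c * d / ‖a‖ ^ 2 + c * d * (7 / 2) / ‖a‖ ^ 2
      = (c * d + c * d * (7 / 2)) / ‖a‖ ^ 2 := by rw [← add_div]
  have h6 : (c * d + c * d * (7 / 2)) / ‖a‖ ^ 2
      ≤ (c * d + c * d * (7 / 2) + c * d * (1 / 2)) / ‖a‖ ^ 2 := by
    gcongr ?_ / _
    nlinarith [mul_nonneg hc hd.le]
  linarith

lemma ball_bound {H : ℝ} (hH : 1 ≤ H) {R : ℝ} (hR : 0 < R) (x ξ z : E2)
    (hz : ‖z - x‖ ≤ R) :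
    (H + lnm ‖z - ξ‖) * ‖z - x‖⁻¹ ≤
      H * fker R ‖z - x‖ + flog R ‖z - x‖ + flog R ‖z - ξ‖ := by
  have hfk : fker R ‖z - x‖ = ‖z - x‖⁻¹ := if_pos hz
  have hfl : flog R ‖z - x‖ = lnm ‖z - x‖ * ‖z - x‖⁻¹ := if_pos hz
  have hmain : lnm ‖z - ξ‖ * ‖z - x‖⁻¹ ≤ flog R ‖z - x‖ + flog R ‖z - ξ‖ := by
    rcases eq_or_lt_of_le (norm_nonneg (z - x)) with h0 | h0
    · rw [← h0]
      simp only [inv_zero, mul_zero]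
      exact add_nonneg (flog_nonneg le_rfl) (flog_nonneg (norm_nonneg _))
    · rcases le_total ‖z - x‖ ‖z - ξ‖ with hle | hle
      · have : lnm ‖z - ξ‖ ≤ lnm ‖z - x‖ := lnm_anti h0 hle
        have h1 : lnm ‖z - ξ‖ * ‖z - x‖⁻¹ ≤ lnm ‖z - x‖ * ‖z - x‖⁻¹ := by
          gcongr
        refine h1.trans ?_
        rw [← hfl]
        exact le_add_of_nonneg_right (flog_nonneg (norm_nonneg _))
      · rcases eq_or_lt_of_le (norm_nonneg (z - ξ)) with h0' | h0'
        · rw [← h0', lnm_zero, zero_mul]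
          exact add_nonneg (flog_nonneg (norm_nonneg _)) (flog_nonneg le_rfl)
        · have hfl' : flog R ‖z - ξ‖ = lnm ‖z - ξ‖ * ‖z - ξ‖⁻¹ :=
            if_pos (hle.trans hz)
          have h1 : lnm ‖z - ξ‖ * ‖z - x‖⁻¹ ≤ lnm ‖z - ξ‖ * ‖z - ξ‖⁻¹ := by
            gcongr
            exact lnm_nonneg _
          refine h1.trans ?_
          rw [← hfl']
          exact le_add_of_nonneg_left (flog_nonneg (norm_nonneg _))
  have hexp : (H + lnm ‖z - ξ‖) * ‖z - x‖⁻¹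
      = H * ‖z - x‖⁻¹ + lnm ‖z - ξ‖ * ‖z - x‖⁻¹ := by ring
  rw [hexp, hfk]
  linarith

lemma ann_bound {H d : ℝ} (hH : 1 ≤ H) {s : ℝ} (hs : 0 < s) (hd : 0 ≤ d) (x ξ z : E2)
    (h1 : s ≤ ‖z - x‖) (h2 : ‖z - x‖ ≤ 1) :
    (H + lnm ‖z - ξ‖) * (5 * d / ‖z - x‖ ^ 2) ≤
      5 * d * H * fann s ‖z - x‖ + 5 * d * fanl s ‖z - x‖ + 5 * d * fanl s ‖z - ξ‖
        + (5 * d / s ^ 2) * fsml s ‖z - ξ‖ := by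
  have hr : 0 < ‖z - x‖ := lt_of_lt_of_le hs h1
  have hfa : fann s ‖z - x‖ = (‖z - x‖ ^ 2)⁻¹ := if_pos ⟨h1, h2⟩
  have hH' : H * (5 * d / ‖z - x‖ ^ 2) = 5 * d * H * fann s ‖z - x‖ := by
    rw [hfa]; field_simp
  have hnn1 : 0 ≤ 5 * d * fanl s ‖z - x‖ :=
    mul_nonneg (by positivity) fanl_nonneg
  have hnn2 : 0 ≤ 5 * d * fanl s ‖z - ξ‖ :=
    mul_nonneg (by positivity) fanl_nonneg
  have hnn3 : 0 ≤ (5 * d / s ^ 2) * fsml s ‖z - ξ‖ :=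
    mul_nonneg (by positivity) fsml_nonneg
  have hmain : lnm ‖z - ξ‖ * (5 * d / ‖z - x‖ ^ 2) ≤
      5 * d * fanl s ‖z - x‖ + 5 * d * fanl s ‖z - ξ‖ + (5 * d / s ^ 2) * fsml s ‖z - ξ‖ := by
    rcases le_total ‖z - x‖ ‖z - ξ‖ with hle | hle
    · have hlnm : lnm ‖z - ξ‖ ≤ lnm ‖z - x‖ := lnm_anti hr hle
      have hfal : fanl s ‖z - x‖ = lnm ‖z - x‖ * (‖z - x‖ ^ 2)⁻¹ := if_pos ⟨h1, h2⟩
      have hkey : lnm ‖z - ξ‖ * (5 * d / ‖z - x‖ ^ 2) ≤ 5 * d * fanl s ‖z - x‖ := by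
        rw [hfal]
        have hth := mul_le_mul_of_nonneg_right hlnm
          (by positivity : (0:ℝ) ≤ 5 * d / ‖z - x‖ ^ 2)
        have heq : lnm ‖z - x‖ * (5 * d / ‖z - x‖ ^ 2)
            = 5 * d * (lnm ‖z - x‖ * (‖z - x‖ ^ 2)⁻¹) := by ring
        linarith [heq ▸ hth]
      linarith
    · rcases le_total s ‖z - ξ‖ with hle2 | hle2
      · have hξ : 0 < ‖z - ξ‖ := lt_of_lt_of_le hs hle2
        have hfal : fanl s ‖z - ξ‖ = lnm ‖z - ξ‖ * (‖z - ξ‖ ^ 2)⁻¹ :=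
          if_pos ⟨hle2, hle.trans h2⟩
        have hkey : lnm ‖z - ξ‖ * (5 * d / ‖z - x‖ ^ 2) ≤ 5 * d * fanl s ‖z - ξ‖ := by
          rw [hfal]
          have hd2 : 5 * d / ‖z - x‖ ^ 2 ≤ 5 * d / ‖z - ξ‖ ^ 2 := by gcongr
          have := mul_le_mul_of_nonneg_left hd2 (lnm_nonneg ‖z - ξ‖)
          have heq : lnm ‖z - ξ‖ * (5 * d / ‖z - ξ‖ ^ 2)
              = 5 * d * (lnm ‖z - ξ‖ * (‖z - ξ‖ ^ 2)⁻¹) := by ring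
          linarith [heq ▸ this]
        linarith
      · have hfsm : fsml s ‖z - ξ‖ = lnm ‖z - ξ‖ := if_pos hle2
        have hkey : lnm ‖z - ξ‖ * (5 * d / ‖z - x‖ ^ 2) ≤
            (5 * d / s ^ 2) * fsml s ‖z - ξ‖ := by
          rw [hfsm]
          have hd2 : 5 * d / ‖z - x‖ ^ 2 ≤ 5 * d / s ^ 2 := by gcongr
          have := mul_le_mul_of_nonneg_left hd2 (lnm_nonneg ‖z - ξ‖)
          linarith [this]
        linarith
  have hexp : (H + lnm ‖z - ξ‖) * (5 * d / ‖z - x‖ ^ 2)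
      = H * (5 * d / ‖z - x‖ ^ 2) + lnm ‖z - ξ‖ * (5 * d / ‖z - x‖ ^ 2) := by ring
  rw [hexp, hH']
  linarith

end Pointwise

section Radial

local notation "E2" => EuclideanSpace ℝ (Fin 2)

lemma volume_ball_E2 : (volume (Metric.ball (0 : E2) 1)).toReal = π := by
  rw [EuclideanSpace.volume_ball]
  simp only [Fintype.card_fin]
  rw [show ((2 : ℕ) : ℝ) / 2 + 1 = 2 by norm_num]
  rw [Real.Gamma_two]
  simp [Real.sq_sqrt Real.pi_nonneg, ENNReal.toReal_ofReal Real.pi_nonneg]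

lemma integral_radial (a : E2) (f : ℝ → ℝ) :
    ∫ z : E2, f ‖z - a‖ = 2 * π * ∫ r in Ioi (0:ℝ), r * f r := by
  have h1 : ∫ z : E2, f ‖z - a‖ = ∫ z : E2, f ‖z‖ :=
    integral_sub_right_eq_self (fun z : E2 => f ‖z‖) a
  rw [h1, integral_fun_norm_addHaar volume f, finrank_euclideanSpace_fin, measureReal_def, volume_ball_E2]
  norm_num [smul_eq_mul]
  ring

end Radial

local notation "E2" => EuclideanSpace ℝ (Fin 2)

lemma lintegral_radial_lt_top (f : ℝ → ℝ) (hm : Measurable f)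
    (hi : IntegrableOn (fun r => r * f r) (Ioi (0:ℝ))) :
    ∫⁻ z : E2, ENNReal.ofReal (f ‖z‖) < ⊤ := by
  set F : ℝ → ENNReal := fun r => ENNReal.ofReal (f r) with hF
  have hFm : Measurable F := ENNReal.measurable_ofReal.comp hm
  have key : ∫⁻ z : E2, F ‖z‖ =
      (volume : Measure E2).toSphere univ *
        ∫⁻ r : Ioi (0:ℝ), F r.1 ∂(Measure.volumeIoiPow (Module.finrank ℝ E2 - 1)) := by
    calc ∫⁻ z : E2, F ‖z‖
        = ∫⁻ z in ({(0:E2)}ᶜ : Set E2), F ‖z‖ := by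
          rw [MeasureTheory.restrict_compl_singleton]
      _ = ∫⁻ x : ({(0:E2)}ᶜ : Set E2), F ‖x.1‖ ∂(volume.comap Subtype.val) :=
          (lintegral_subtype_comap (measurableSet_singleton _).compl _).symm
      _ = ∫⁻ p : Metric.sphere (0:E2) 1 × Ioi (0:ℝ), F p.2.1
            ∂((volume : Measure E2).toSphere.prod
              (Measure.volumeIoiPow (Module.finrank ℝ E2 - 1))) :=
          by have h := (volume : Measure E2).measurePreserving_homeomorphUnitSphereProd.lintegral_comp_emb
                (Homeomorph.measurableEmbedding _) (F ∘ Subtype.val ∘ Prod.snd)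
             simpa [Function.comp_def] using h
      _ = _ := by
          refine (lintegral_prod (F ∘ Subtype.val ∘ Prod.snd)
            ((hFm.comp (measurable_subtype_coe.comp measurable_snd)).aemeasurable)).trans ?_
          simp only [Function.comp]
          rw [lintegral_const, mul_comm]
  rw [key]
  refine ENNReal.mul_lt_top (measure_lt_top _ _) ?_
  rw [finrank_euclideanSpace_fin]
  have h1 : ∫⁻ r : Ioi (0:ℝ), F r.1 ∂(Measure.volumeIoiPow (2 - 1)) =
      ∫⁻ r in Ioi (0:ℝ), ENNReal.ofReal (r ^ 1) * F r := by
    rw [Measure.volumeIoiPow]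
    refine (lintegral_withDensity_eq_lintegral_mul _
      (f := fun r : Ioi (0:ℝ) => ENNReal.ofReal (r.1 ^ (2 - 1)))
      (ENNReal.measurable_ofReal.comp ((measurable_subtype_coe).pow_const _))
      (g := F ∘ Subtype.val) (hFm.comp measurable_subtype_coe)).trans ?_
    exact lintegral_subtype_comap measurableSet_Ioi
      (fun t : ℝ => ENNReal.ofReal (t ^ 1) * F t)
  rw [h1]
  have h2 : ∫⁻ r in Ioi (0:ℝ), ENNReal.ofReal (r ^ 1) * F r =
      ∫⁻ r in Ioi (0:ℝ), ENNReal.ofReal (r * f r) := by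
    refine setLIntegral_congr_fun measurableSet_Ioi (fun r hr => ?_)
    rw [pow_one, hF, ← ENNReal.ofReal_mul (le_of_lt hr)]
  rw [h2]
  exact hi.setLIntegral_lt_top

lemma integrable_radial (a : E2) (f : ℝ → ℝ) (hm : Measurable f) (h0 : ∀ r, 0 ≤ r → 0 ≤ f r)
    (hi : IntegrableOn (fun r => r * f r) (Ioi (0:ℝ))) :
    Integrable (fun z : E2 => f ‖z - a‖) := by
  suffices h : Integrable (fun z : E2 => f ‖z‖) from h.comp_sub_right a
  have hmeas : Measurable (fun z : E2 => f ‖z‖) := hm.comp measurable_norm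
  refine ⟨hmeas.aestronglyMeasurable, ?_⟩
  rw [hasFiniteIntegral_iff_ofReal (ae_of_all _ fun z => h0 _ (norm_nonneg _))]
  exact lintegral_radial_lt_top f hm hi

/-! ### main theorem -/

noncomputable def fout (r : ℝ) : ℝ := if 1 < r then 1 else 0

lemma fout_nonneg {r : ℝ} : 0 ≤ fout r := by unfold fout; split <;> norm_num

lemma fout_le_one {r : ℝ} : fout r ≤ 1 := by unfold fout; split <;> norm_num

lemma measurable_fout : Measurable fout :=
  Measurable.ite measurableSet_Ioi measurable_const measurable_const

section Main

lemma integral_radial_le (a : E2) {f : ℝ → ℝ} {B : ℝ} (hB : ∫ r in Ioi (0:ℝ), r * f r ≤ B) :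
    ∫ z : E2, f ‖z - a‖ ≤ 2 * π * B := by
  rw [integral_radial]
  have := Real.pi_pos
  nlinarith

lemma measurable_field {ρ : E2 → ℝ} (hm : Measurable ρ) (x : E2) :
    Measurable (fun z : E2 => (ρ z / ‖x - z‖ ^ 2) • (x - z)) := by
  have h1 : Measurable (fun z : E2 => ρ z / ‖x - z‖ ^ 2) :=
    hm.div (((measurable_const.sub measurable_id).norm).pow_const 2)
  exact h1.smul (measurable_const.sub measurable_id)

lemma norm_field_eq {ρ : E2 → ℝ} (hpos : ∀ z, 0 ≤ ρ z) (x z : E2) :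
    ‖(ρ z / ‖x - z‖ ^ 2) • (x - z)‖ = ρ z * ‖z - x‖⁻¹ := by
  rw [norm_smul_field _ (hpos z), norm_sub_rev]

lemma integrable_triple {H : ℝ} (hH : 1 ≤ H) {R : ℝ} (hR : 0 < R) (x ξ : E2) :
    Integrable (fun z : E2 =>
      H * fker R ‖z - x‖ + flog R ‖z - x‖ + flog R ‖z - ξ‖) := by
  have i1 : Integrable (fun z : E2 => fker R ‖z - x‖) :=
    integrable_radial x (fker R) (measurable_fker R) (fun r hr => fker_nonneg hr) (J1 hR)
  have i2 : Integrable (fun z : E2 => flog R ‖z - x‖) :=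
    integrable_radial x (flog R) (measurable_flog R) (fun r hr => flog_nonneg hr) (J2 hR)
  have i3 : Integrable (fun z : E2 => flog R ‖z - ξ‖) :=
    integrable_radial ξ (flog R) (measurable_flog R) (fun r hr => flog_nonneg hr) (J2 hR)
  exact ((i1.const_mul H).add i2).add i3

lemma triple_nonneg {H R : ℝ} (hH : 1 ≤ H) (x ξ z : E2) :
    0 ≤ H * fker R ‖z - x‖ + flog R ‖z - x‖ + flog R ‖z - ξ‖ := by
  have h1 := fker_nonneg (R := R) (norm_nonneg (z - x))
  have h2 := flog_nonneg (R := R) (norm_nonneg (z - x))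
  have h3 := flog_nonneg (R := R) (norm_nonneg (z - ξ))
  nlinarith

lemma integrable_field {ρ : E2 → ℝ} {H : ℝ} {ξ : E2} (hH : 1 ≤ H) (hm : Measurable ρ)
    (hpos : ∀ z, 0 ≤ ρ z) (hint : Integrable ρ) (hb : ∀ z, ρ z ≤ H + lnm ‖z - ξ‖) (x : E2) :
    Integrable (fun z : E2 => (ρ z / ‖x - z‖ ^ 2) • (x - z)) := by
  have hQ : Integrable (fun z : E2 =>
      (H * fker 1 ‖z - x‖ + flog 1 ‖z - x‖ + flog 1 ‖z - ξ‖) + ρ z) :=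
    (integrable_triple hH one_pos x ξ).add hint
  refine Integrable.mono' hQ (measurable_field hm x).aestronglyMeasurable (ae_of_all _ ?_)
  intro z
  rw [norm_field_eq hpos x z]
  rcases le_or_gt ‖z - x‖ 1 with h | h
  · have h1 : ρ z * ‖z - x‖⁻¹ ≤ (H + lnm ‖z - ξ‖) * ‖z - x‖⁻¹ := by
      gcongr
      exact hb z
    refine (h1.trans (ball_bound hH one_pos x ξ z h)).trans ?_
    exact le_add_of_nonneg_right (hpos z)
  · have h1 : ρ z * ‖z - x‖⁻¹ ≤ ρ z := by
      have : ‖z - x‖⁻¹ ≤ 1 := by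
        rw [inv_le_one_iff₀]
        right; exact h.le
      nlinarith [hpos z]
    refine h1.trans ?_
    exact le_add_of_nonneg_left (triple_nonneg hH x ξ z)

end Main

section IntBounds

lemma int_triple_le {H : ℝ} (hH : 1 ≤ H) {R : ℝ} (hR : 0 < R) (x ξ : EuclideanSpace ℝ (Fin 2)) :
    ∫ z : EuclideanSpace ℝ (Fin 2),
        (H * fker R ‖z - x‖ + flog R ‖z - x‖ + flog R ‖z - ξ‖) ≤
      2 * π * (R * H) + 2 * (2 * π * (R * (1 + lnm R))) := by
  have i1 : Integrable (fun z : EuclideanSpace ℝ (Fin 2) => fker R ‖z - x‖) :=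
    integrable_radial x (fker R) (measurable_fker R) (fun r hr => fker_nonneg hr) (J1 hR)
  have i2 : Integrable (fun z : EuclideanSpace ℝ (Fin 2) => flog R ‖z - x‖) :=
    integrable_radial x (flog R) (measurable_flog R) (fun r hr => flog_nonneg hr) (J2 hR)
  have i3 : Integrable (fun z : EuclideanSpace ℝ (Fin 2) => flog R ‖z - ξ‖) :=
    integrable_radial ξ (flog R) (measurable_flog R) (fun r hr => flog_nonneg hr) (J2 hR)
  rw [integral_add (f := fun z : EuclideanSpace ℝ (Fin 2) =>
        H * fker R ‖z - x‖ + flog R ‖z - x‖)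
      (g := fun z : EuclideanSpace ℝ (Fin 2) => flog R ‖z - ξ‖) ((i1.const_mul H).add i2) i3,
    integral_add (f := fun z : EuclideanSpace ℝ (Fin 2) => H * fker R ‖z - x‖)
      (g := fun z : EuclideanSpace ℝ (Fin 2) => flog R ‖z - x‖) (i1.const_mul H) i2,
    integral_const_mul, integral_radial x (fker R), K1 hR]
  have h2 : ∫ z : EuclideanSpace ℝ (Fin 2), flog R ‖z - x‖ ≤ 2 * π * (R * (1 + lnm R)) :=
    integral_radial_le x (K2 hR)
  have h3 : ∫ z : EuclideanSpace ℝ (Fin 2), flog R ‖z - ξ‖ ≤ 2 * π * (R * (1 + lnm R)) :=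
    integral_radial_le ξ (K2 hR)
  have hpi := Real.pi_pos
  nlinarith

lemma int_quad_le {H d s : ℝ} (hH : 1 ≤ H) (hs : 0 < s) (hs1 : s ≤ 1) (hd : 0 ≤ d)
    (x ξ : EuclideanSpace ℝ (Fin 2)) :
    ∫ z : EuclideanSpace ℝ (Fin 2),
        (5 * d * H * fann s ‖z - x‖ + 5 * d * fanl s ‖z - x‖ + 5 * d * fanl s ‖z - ξ‖
          + (5 * d / s ^ 2) * fsml s ‖z - ξ‖) ≤
      10 * π * d * H * lnm s + 10 * π * d * (lnm s) ^ 2 + 10 * π * d * (1 + lnm s) := by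
  have i1 : Integrable (fun z : EuclideanSpace ℝ (Fin 2) => fann s ‖z - x‖) :=
    integrable_radial x (fann s) (measurable_fann s) (fun r _ => fann_nonneg) (J3 hs)
  have i2 : Integrable (fun z : EuclideanSpace ℝ (Fin 2) => fanl s ‖z - x‖) :=
    integrable_radial x (fanl s) (measurable_fanl s) (fun r _ => fanl_nonneg) (J4 hs)
  have i3 : Integrable (fun z : EuclideanSpace ℝ (Fin 2) => fanl s ‖z - ξ‖) :=
    integrable_radial ξ (fanl s) (measurable_fanl s) (fun r _ => fanl_nonneg) (J4 hs)
  have i4 : Integrable (fun z : EuclideanSpace ℝ (Fin 2) => fsml s ‖z - ξ‖) :=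
    integrable_radial ξ (fsml s) (measurable_fsml s) (fun r _ => fsml_nonneg) (J5 hs hs1)
  rw [integral_add (f := fun z : EuclideanSpace ℝ (Fin 2) =>
        5 * d * H * fann s ‖z - x‖ + 5 * d * fanl s ‖z - x‖ + 5 * d * fanl s ‖z - ξ‖)
      (g := fun z : EuclideanSpace ℝ (Fin 2) => (5 * d / s ^ 2) * fsml s ‖z - ξ‖)
      (((i1.const_mul _).add (i2.const_mul _)).add (i3.const_mul _)) (i4.const_mul _),
    integral_add (f := fun z : EuclideanSpace ℝ (Fin 2) =>
        5 * d * H * fann s ‖z - x‖ + 5 * d * fanl s ‖z - x‖)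
      (g := fun z : EuclideanSpace ℝ (Fin 2) => 5 * d * fanl s ‖z - ξ‖)
      ((i1.const_mul _).add (i2.const_mul _)) (i3.const_mul _),
    integral_add (f := fun z : EuclideanSpace ℝ (Fin 2) => 5 * d * H * fann s ‖z - x‖)
      (g := fun z : EuclideanSpace ℝ (Fin 2) => 5 * d * fanl s ‖z - x‖)
      (i1.const_mul _) (i2.const_mul _),
    integral_const_mul, integral_const_mul, integral_const_mul, integral_const_mul,
    integral_radial x (fann s), K3 hs hs1]
  have h2 : ∫ z : EuclideanSpace ℝ (Fin 2), fanl s ‖z - x‖ ≤ 2 * π * ((lnm s) ^ 2 / 2) :=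
    integral_radial_le x (K4 hs hs1)
  have h3 : ∫ z : EuclideanSpace ℝ (Fin 2), fanl s ‖z - ξ‖ ≤ 2 * π * ((lnm s) ^ 2 / 2) :=
    integral_radial_le ξ (K4 hs hs1)
  have h4 : ∫ z : EuclideanSpace ℝ (Fin 2), fsml s ‖z - ξ‖ ≤ 2 * π * (s ^ 2 * (1 + lnm s)) :=
    integral_radial_le ξ (K5 hs hs1)
  have hpi := Real.pi_pos
  have hlnm := lnm_nonneg s
  have e4 : (5 * d / s ^ 2) * (2 * π * (s ^ 2 * (1 + lnm s))) = 10 * π * d * (1 + lnm s) := by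
    field_simp
    ring
  have h4' : (5 * d / s ^ 2) * ∫ z : EuclideanSpace ℝ (Fin 2), fsml s ‖z - ξ‖ ≤
      10 * π * d * (1 + lnm s) := by
    rw [← e4]
    gcongr
  nlinarith [mul_le_mul_of_nonneg_left h2 (by positivity : (0:ℝ) ≤ 5 * d),
    mul_le_mul_of_nonneg_left h3 (by positivity : (0:ℝ) ≤ 5 * d)]

end IntBounds

set_option maxHeartbeats 1000000 in
theorem field_quasi_lipschitz :
    ∃ C > 0, ∀ (ρ : EuclideanSpace ℝ (Fin 2) → ℝ) (H : ℝ)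
      (ξ : EuclideanSpace ℝ (Fin 2)),
      1 ≤ H → Measurable ρ → (∀ x, 0 ≤ ρ x) → Integrable ρ →
      (∫ x, ρ x) ≤ 1 → (∀ x, ρ x ≤ H + lnm ‖x - ξ‖) →
      ∀ x y : EuclideanSpace ℝ (Fin 2), ‖x - y‖ ≤ 1 / 3 →
        ‖(∫ z, (ρ z / ‖x - z‖ ^ 2) • (x - z)) -
            ∫ z, (ρ z / ‖y - z‖ ^ 2) • (y - z)‖ ≤
          C * ‖x - y‖ * (1 + lnm ‖x - y‖) * (H + lnm ‖x - y‖) := by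
  refine ⟨300, by norm_num, ?_⟩
  intro ρ H ξ hH hmeas hpos hint hmass hbound x y hxy
  rcases eq_or_lt_of_le (norm_nonneg (x - y)) with hd0 | hd0
  · have hxy0 : x = y := sub_eq_zero.1 (norm_eq_zero.1 hd0.symm)
    subst hxy0
    simp
  · set d := ‖x - y‖ with hddef
    set L := lnm d with hLdef
    have hd : 0 < d := hd0
    have hd3 : d ≤ 1 / 3 := hxy
    have hs : 0 < 3 * d := by linarith
    have hs1 : 3 * d ≤ 1 := by linarith
    have ht : 0 < 4 * d := by linarith
    have hL0 : 0 ≤ L := lnm_nonneg d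
    have hLs : lnm (3 * d) ≤ L := lnm_anti hd (by linarith)
    have hLt : lnm (4 * d) ≤ L := lnm_anti hd (by linarith)
    have hfx := integrable_field hH hmeas hpos hint hbound x
    have hfy := integrable_field hH hmeas hpos hint hbound y
    have hg1 : Integrable (fun z : EuclideanSpace ℝ (Fin 2) =>
        H * fker (3 * d) ‖z - x‖ + flog (3 * d) ‖z - x‖ + flog (3 * d) ‖z - ξ‖) :=
      integrable_triple hH hs x ξ
    have hg2 : Integrable (fun z : EuclideanSpace ℝ (Fin 2) =>
        H * fker (4 * d) ‖z - y‖ + flog (4 * d) ‖z - y‖ + flog (4 * d) ‖z - ξ‖) :=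
      integrable_triple hH ht y ξ
    have i1 : Integrable (fun z : EuclideanSpace ℝ (Fin 2) => fann (3 * d) ‖z - x‖) :=
      integrable_radial x _ (measurable_fann _) (fun r _ => fann_nonneg) (J3 hs)
    have i2 : Integrable (fun z : EuclideanSpace ℝ (Fin 2) => fanl (3 * d) ‖z - x‖) :=
      integrable_radial x _ (measurable_fanl _) (fun r _ => fanl_nonneg) (J4 hs)
    have i3 : Integrable (fun z : EuclideanSpace ℝ (Fin 2) => fanl (3 * d) ‖z - ξ‖) :=
      integrable_radial ξ _ (measurable_fanl _) (fun r _ => fanl_nonneg) (J4 hs)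
    have i4 : Integrable (fun z : EuclideanSpace ℝ (Fin 2) => fsml (3 * d) ‖z - ξ‖) :=
      integrable_radial ξ _ (measurable_fsml _) (fun r _ => fsml_nonneg) (J5 hs hs1)
    have hg3 : Integrable (fun z : EuclideanSpace ℝ (Fin 2) =>
        5 * d * H * fann (3 * d) ‖z - x‖ + 5 * d * fanl (3 * d) ‖z - x‖
          + 5 * d * fanl (3 * d) ‖z - ξ‖
          + (5 * d / (3 * d) ^ 2) * fsml (3 * d) ‖z - ξ‖) :=
      (((i1.const_mul _).add (i2.const_mul _)).add (i3.const_mul _)).add (i4.const_mul _)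
    have hρf : Integrable (fun z : EuclideanSpace ℝ (Fin 2) => ρ z * fout ‖z - x‖) := by
      refine Integrable.mono' hint
        ((hmeas.mul (measurable_fout.comp
          ((measurable_id.sub measurable_const).norm))).aestronglyMeasurable)
        (ae_of_all _ fun z => ?_)
      have h1 : 0 ≤ ρ z * fout ‖z - x‖ := mul_nonneg (hpos z) fout_nonneg
      rw [Real.norm_of_nonneg h1]
      nlinarith [hpos z, fout_le_one (r := ‖z - x‖)]
    have hg4 : Integrable (fun z : EuclideanSpace ℝ (Fin 2) =>
        5 * d * (ρ z * fout ‖z - x‖)) := hρf.const_mul _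
    -- pointwise bound
    have hptw : ∀ z : EuclideanSpace ℝ (Fin 2),
        ‖(ρ z / ‖x - z‖ ^ 2) • (x - z) - (ρ z / ‖y - z‖ ^ 2) • (y - z)‖ ≤
          (H * fker (3 * d) ‖z - x‖ + flog (3 * d) ‖z - x‖ + flog (3 * d) ‖z - ξ‖)
          + (H * fker (4 * d) ‖z - y‖ + flog (4 * d) ‖z - y‖ + flog (4 * d) ‖z - ξ‖)
          + (5 * d * H * fann (3 * d) ‖z - x‖ + 5 * d * fanl (3 * d) ‖z - x‖
              + 5 * d * fanl (3 * d) ‖z - ξ‖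
              + (5 * d / (3 * d) ^ 2) * fsml (3 * d) ‖z - ξ‖)
          + 5 * d * (ρ z * fout ‖z - x‖) := by
      intro z
      have n1 := triple_nonneg (H := H) (R := 3 * d) hH x ξ z
      have n2 := triple_nonneg (H := H) (R := 4 * d) hH y ξ z
      have n3a : 0 ≤ 5 * d * H * fann (3 * d) ‖z - x‖ :=
        mul_nonneg (by positivity) fann_nonneg
      have n3b : 0 ≤ 5 * d * fanl (3 * d) ‖z - x‖ := mul_nonneg (by positivity) fanl_nonneg
      have n3c : 0 ≤ 5 * d * fanl (3 * d) ‖z - ξ‖ := mul_nonneg (by positivity) fanl_nonneg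
      have n3d : 0 ≤ (5 * d / (3 * d) ^ 2) * fsml (3 * d) ‖z - ξ‖ :=
        mul_nonneg (by positivity) fsml_nonneg
      have n4 : 0 ≤ 5 * d * (ρ z * fout ‖z - x‖) :=
        mul_nonneg (by positivity) (mul_nonneg (hpos z) fout_nonneg)
      rcases le_or_gt ‖z - x‖ (3 * d) with hcase | hcase
      · -- near regime
        have hzy : ‖z - y‖ ≤ 4 * d := by
          have h1 : z - y = (z - x) + (x - y) := by abel
          calc ‖z - y‖ = ‖(z - x) + (x - y)‖ := by rw [← h1]
            _ ≤ ‖z - x‖ + ‖x - y‖ := norm_add_le _ _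
            _ ≤ 4 * d := by rw [← hddef]; linarith
        have hx1 : ‖(ρ z / ‖x - z‖ ^ 2) • (x - z)‖ ≤
            H * fker (3 * d) ‖z - x‖ + flog (3 * d) ‖z - x‖ + flog (3 * d) ‖z - ξ‖ := by
          rw [norm_field_eq hpos x z]
          refine le_trans ?_ (ball_bound hH hs x ξ z hcase)
          gcongr
          exact hbound z
        have hy1 : ‖(ρ z / ‖y - z‖ ^ 2) • (y - z)‖ ≤
            H * fker (4 * d) ‖z - y‖ + flog (4 * d) ‖z - y‖ + flog (4 * d) ‖z - ξ‖ := by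
          rw [norm_field_eq hpos y z]
          refine le_trans ?_ (ball_bound hH ht y ξ z hzy)
          gcongr
          exact hbound z
        have := norm_sub_le ((ρ z / ‖x - z‖ ^ 2) • (x - z)) ((ρ z / ‖y - z‖ ^ 2) • (y - z))
        linarith
      · -- far regime
        have ha : 3 * d ≤ ‖x - z‖ := by rw [norm_sub_rev]; exact hcase.le
        have habd : ‖(x - z) - (y - z)‖ ≤ d := by
          have h1 : (x - z) - (y - z) = x - y := by abel
          rw [h1]
        have hker := kernel_diff hd habd ha (ρ z) (hpos z)
        have hstep2 : ρ z * (5 * d / ‖x - z‖ ^ 2) ≤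
            (H + lnm ‖z - ξ‖) * (5 * d / ‖z - x‖ ^ 2) := by
          rw [norm_sub_rev x z]
          gcongr
          exact hbound z
        rcases le_or_gt ‖z - x‖ 1 with hone | hone
        · have hann := ann_bound hH hs hd.le x ξ z hcase.le hone
          linarith
        · have hout : fout ‖z - x‖ = 1 := if_pos hone
          have hr2 : 1 ≤ ‖z - x‖ ^ 2 := by nlinarith
          have hfar : ρ z * (5 * d / ‖x - z‖ ^ 2) ≤ 5 * d * (ρ z * fout ‖z - x‖) := by
            rw [hout, mul_one, norm_sub_rev x z]
            have h5 : 5 * d / ‖z - x‖ ^ 2 ≤ 5 * d := div_le_self (by positivity) hr2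
            nlinarith [hpos z]
          linarith
    -- assemble
    have hmain : ‖(∫ z, (ρ z / ‖x - z‖ ^ 2) • (x - z)) -
        ∫ z, (ρ z / ‖y - z‖ ^ 2) • (y - z)‖ ≤
        ∫ z : EuclideanSpace ℝ (Fin 2),
          ((H * fker (3 * d) ‖z - x‖ + flog (3 * d) ‖z - x‖ + flog (3 * d) ‖z - ξ‖)
          + (H * fker (4 * d) ‖z - y‖ + flog (4 * d) ‖z - y‖ + flog (4 * d) ‖z - ξ‖)
          + (5 * d * H * fann (3 * d) ‖z - x‖ + 5 * d * fanl (3 * d) ‖z - x‖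
              + 5 * d * fanl (3 * d) ‖z - ξ‖
              + (5 * d / (3 * d) ^ 2) * fsml (3 * d) ‖z - ξ‖)
          + 5 * d * (ρ z * fout ‖z - x‖)) := by
      rw [← integral_sub hfx hfy]
      exact norm_integral_le_of_norm_le (((hg1.add hg2).add hg3).add hg4) (ae_of_all _ hptw)
    have hsplit : ∫ z : EuclideanSpace ℝ (Fin 2),
          ((H * fker (3 * d) ‖z - x‖ + flog (3 * d) ‖z - x‖ + flog (3 * d) ‖z - ξ‖)
          + (H * fker (4 * d) ‖z - y‖ + flog (4 * d) ‖z - y‖ + flog (4 * d) ‖z - ξ‖)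
          + (5 * d * H * fann (3 * d) ‖z - x‖ + 5 * d * fanl (3 * d) ‖z - x‖
              + 5 * d * fanl (3 * d) ‖z - ξ‖
              + (5 * d / (3 * d) ^ 2) * fsml (3 * d) ‖z - ξ‖)
          + 5 * d * (ρ z * fout ‖z - x‖))
        = (∫ z : EuclideanSpace ℝ (Fin 2),
            (H * fker (3 * d) ‖z - x‖ + flog (3 * d) ‖z - x‖ + flog (3 * d) ‖z - ξ‖))
          + (∫ z : EuclideanSpace ℝ (Fin 2),
            (H * fker (4 * d) ‖z - y‖ + flog (4 * d) ‖z - y‖ + flog (4 * d) ‖z - ξ‖))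
          + (∫ z : EuclideanSpace ℝ (Fin 2),
            (5 * d * H * fann (3 * d) ‖z - x‖ + 5 * d * fanl (3 * d) ‖z - x‖
              + 5 * d * fanl (3 * d) ‖z - ξ‖
              + (5 * d / (3 * d) ^ 2) * fsml (3 * d) ‖z - ξ‖))
          + ∫ z : EuclideanSpace ℝ (Fin 2), 5 * d * (ρ z * fout ‖z - x‖) := by
      rw [integral_add (f := fun z : EuclideanSpace ℝ (Fin 2) =>
            (H * fker (3 * d) ‖z - x‖ + flog (3 * d) ‖z - x‖ + flog (3 * d) ‖z - ξ‖)
            + (H * fker (4 * d) ‖z - y‖ + flog (4 * d) ‖z - y‖ + flog (4 * d) ‖z - ξ‖)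
            + (5 * d * H * fann (3 * d) ‖z - x‖ + 5 * d * fanl (3 * d) ‖z - x‖
                + 5 * d * fanl (3 * d) ‖z - ξ‖
                + (5 * d / (3 * d) ^ 2) * fsml (3 * d) ‖z - ξ‖))
          (g := fun z : EuclideanSpace ℝ (Fin 2) => 5 * d * (ρ z * fout ‖z - x‖))
          ((hg1.add hg2).add hg3) hg4,
        integral_add (f := fun z : EuclideanSpace ℝ (Fin 2) =>
            (H * fker (3 * d) ‖z - x‖ + flog (3 * d) ‖z - x‖ + flog (3 * d) ‖z - ξ‖)
            + (H * fker (4 * d) ‖z - y‖ + flog (4 * d) ‖z - y‖ + flog (4 * d) ‖z - ξ‖))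
          (g := fun z : EuclideanSpace ℝ (Fin 2) =>
            5 * d * H * fann (3 * d) ‖z - x‖ + 5 * d * fanl (3 * d) ‖z - x‖
              + 5 * d * fanl (3 * d) ‖z - ξ‖
              + (5 * d / (3 * d) ^ 2) * fsml (3 * d) ‖z - ξ‖)
          (hg1.add hg2) hg3,
        integral_add (f := fun z : EuclideanSpace ℝ (Fin 2) =>
            H * fker (3 * d) ‖z - x‖ + flog (3 * d) ‖z - x‖ + flog (3 * d) ‖z - ξ‖)
          (g := fun z : EuclideanSpace ℝ (Fin 2) =>
            H * fker (4 * d) ‖z - y‖ + flog (4 * d) ‖z - y‖ + flog (4 * d) ‖z - ξ‖)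
          hg1 hg2]
    have hb1 := int_triple_le hH hs x ξ
    have hb2 := int_triple_le hH ht y ξ
    have hb3 := int_quad_le hH hs hs1 hd.le x ξ
    have hb4 : ∫ z : EuclideanSpace ℝ (Fin 2), 5 * d * (ρ z * fout ‖z - x‖) ≤ 5 * d := by
      rw [integral_const_mul]
      have h5 : ∫ z : EuclideanSpace ℝ (Fin 2), ρ z * fout ‖z - x‖ ≤ ∫ z, ρ z := by
        refine integral_mono hρf hint fun z => ?_
        nlinarith [hpos z, fout_le_one (r := ‖z - x‖), fout_nonneg (r := ‖z - x‖)]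
      calc 5 * d * ∫ z : EuclideanSpace ℝ (Fin 2), ρ z * fout ‖z - x‖
          ≤ 5 * d * 1 := by
            refine mul_le_mul_of_nonneg_left (h5.trans hmass) (by positivity)
        _ = 5 * d := mul_one _
    -- numeric conclusion
    have hπ : 0 < π := Real.pi_pos
    have hπ4 : π ≤ 4 := Real.pi_le_four
    have m1 : lnm (3 * d) ^ 2 ≤ L ^ 2 := pow_le_pow_left₀ (lnm_nonneg _) hLs 2
    have m2 : H * lnm (3 * d) ≤ H * L := mul_le_mul_of_nonneg_left hLs (by linarith)
    have hLs0 := lnm_nonneg (3 * d)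
    have hLt0 := lnm_nonneg (4 * d)
    calc ‖(∫ z, (ρ z / ‖x - z‖ ^ 2) • (x - z)) - ∫ z, (ρ z / ‖y - z‖ ^ 2) • (y - z)‖
        ≤ _ := hmain
      _ = _ := hsplit
      _ ≤ (2 * π * (3 * d * H) + 2 * (2 * π * (3 * d * (1 + L))))
          + (2 * π * (4 * d * H) + 2 * (2 * π * (4 * d * (1 + L))))
          + (10 * π * d * H * L + 10 * π * d * L ^ 2 + 10 * π * d * (1 + L))
          + 5 * d := by
          have t1 : 2 * (2 * π * (3 * d * (1 + lnm (3 * d)))) ≤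
              2 * (2 * π * (3 * d * (1 + L))) := by
            gcongr
          have t2 : 2 * (2 * π * (4 * d * (1 + lnm (4 * d)))) ≤
              2 * (2 * π * (4 * d * (1 + L))) := by
            gcongr
          have t3 : 10 * π * d * H * lnm (3 * d) + 10 * π * d * lnm (3 * d) ^ 2
              + 10 * π * d * (1 + lnm (3 * d)) ≤
              10 * π * d * H * L + 10 * π * d * L ^ 2 + 10 * π * d * (1 + L) := by
            gcongr
          linarith
      _ ≤ 300 * d * (1 + L) * (H + L) := by
          nlinarith [mul_nonneg hd.le hL0, mul_nonneg (mul_nonneg hd.le hL0) hL0,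
            mul_nonneg hd.le (mul_nonneg hL0 hL0),
            mul_le_mul_of_nonneg_left hH hd.le,
            mul_nonneg (sub_nonneg.2 hπ4) (mul_nonneg hd.le (by linarith : (0:ℝ) ≤ H)),
            mul_nonneg (sub_nonneg.2 hπ4) (mul_nonneg hd.le hL0),
            mul_nonneg (sub_nonneg.2 hπ4) (mul_nonneg hd.le (mul_nonneg (by linarith : (0:ℝ) ≤ H) hL0)),
            mul_nonneg (sub_nonneg.2 hπ4) (mul_nonneg hd.le (mul_nonneg hL0 hL0)),
            mul_nonneg (mul_nonneg hd.le hL0) (by linarith : (0:ℝ) ≤ H)]
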